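/- Let Φ(ρ) = Σ_i V_i ρ V_i* be a quantum channel on M_n with Kraus operators V_i and let Q be a projection. Then the commutant of the set {Q V_j* V_i Q}_{i,j} equals the commutant of the orthogonal complement (in the trace inner product) of ker(Φ^C ∘ P_Q). -/

import Mathlib

open Matrix ComplexOrder

/-- The completely positive map with Kraus operators `V i`. -/
noncomputable def krausMap {d n m : ℕ} (V : Fin d → Matrix (Fin m) (Fin n) ℂ) :
    Matrix (Fin n) (Fin n) ℂ →ₗ[ℂ] Matrix (Fin m) (Fin m) ℂ where
  toFun X := ∑ i, V i * X * (V i)ᴴ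
  map_add' X Y := by simp [Matrix.mul_add, Matrix.add_mul, Finset.sum_add_distrib]
  map_smul' c X := by simp [Matrix.mul_smul, Matrix.smul_mul, Finset.smul_sum]

/-- The complementary map `Φ^C(ρ) = ∑_{i,j} tr(ρ V_j* V_i) E_{ij}`. -/
noncomputable def complMap {d n m : ℕ} (V : Fin d → Matrix (Fin m) (Fin n) ℂ) :
    Matrix (Fin n) (Fin n) ℂ →ₗ[ℂ] Matrix (Fin d) (Fin d) ℂ where
  toFun X := Matrix.of fun i j => (X * ((V j)ᴴ * V i)).trace
  map_add' X Y := by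
    ext i j
    simp [Matrix.add_mul]
  map_smul' c X := by
    ext i j
    simp [Matrix.smul_mul]

/-- The compression map `P_Q(X) = Q X Q`. -/
noncomputable def comprMap {n : ℕ} (Q : Matrix (Fin n) (Fin n) ℂ) :
    Matrix (Fin n) (Fin n) ℂ →ₗ[ℂ] Matrix (Fin n) (Fin n) ℂ where
  toFun X := Q * X * Q
  map_add' X Y := by simp [Matrix.mul_add, Matrix.add_mul]
  map_smul' c X := by simp [Matrix.mul_smul, Matrix.smul_mul]

/-- The orthogonal complement of a set of matrices with respect to the trace
(Hilbert–Schmidt) inner product `⟨A, B⟩ = tr(A* B)`. -/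
noncomputable def traceOrthCompl {n : ℕ} (S : Set (Matrix (Fin n) (Fin n) ℂ)) :
    Submodule ℂ (Matrix (Fin n) (Fin n) ℂ) where
  carrier := {X | ∀ A ∈ S, (Aᴴ * X).trace = 0}
  add_mem' := by
    intro a b ha hb A hA
    simp [Matrix.mul_add, ha A hA, hb A hA]
  zero_mem' := by intro A hA; simp
  smul_mem' := by
    intro c x hx A hA
    simp [Matrix.mul_smul, hx A hA]

/-- The commutant of a set of matrices, as a submodule of `M_n`. -/
noncomputable def commutantSub {n : ℕ} (S : Set (Matrix (Fin n) (Fin n) ℂ)) :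
    Submodule ℂ (Matrix (Fin n) (Fin n) ℂ) where
  carrier := {X | ∀ A ∈ S, X * A = A * X}
  add_mem' := by
    intro a b ha hb A hA
    simp [Matrix.mul_add, Matrix.add_mul, ha A hA, hb A hA]
  zero_mem' := by intro A hA; simp
  smul_mem' := by
    intro c x hx A hA
    simp [Matrix.mul_smul, Matrix.smul_mul, hx A hA]

/-- The multiplicative domain of a linear map on `M_n`, as a set. -/
noncomputable def multDomain {n m : ℕ}
    (Φ : Matrix (Fin n) (Fin n) ℂ →ₗ[ℂ] Matrix (Fin m) (Fin m) ℂ) :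
    Set (Matrix (Fin n) (Fin n) ℂ) :=
  {A | ∀ X, Φ (A * X) = Φ A * Φ X ∧ Φ (X * A) = Φ X * Φ A}

section Aux

variable {n : ℕ}

/-- The linear equivalence between matrices and Euclidean space. -/
noncomputable def matEquiv (n : ℕ) :
    Matrix (Fin n) (Fin n) ℂ ≃ₗ[ℂ] EuclideanSpace ℂ (Fin n × Fin n) where
  toFun X := WithLp.toLp 2 (fun p : Fin n × Fin n => X p.1 p.2)
  invFun f := Matrix.of fun i j => f (i, j)
  map_add' X Y := rfl
  map_smul' c X := rfl
  left_inv X := rfl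
  right_inv f := rfl

lemma inner_matEquiv (A X : Matrix (Fin n) (Fin n) ℂ) :
    (inner ℂ (matEquiv n A) (matEquiv n X) : ℂ) = (Aᴴ * X).trace := by
  simp only [PiLp.inner_apply, RCLike.inner_apply, Matrix.trace, Matrix.diag,
    Matrix.mul_apply, matEquiv, LinearEquiv.coe_mk, Matrix.conjTranspose_apply]
  rw [Fintype.sum_prod_type]
  rw [Finset.sum_comm]
  simp [mul_comm, RCLike.star_def]
  rfl

lemma mem_orthogonal_span_iff {E : Type*} [NormedAddCommGroup E] [InnerProductSpace ℂ E]
    (T : Set E) (x : E) :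
    x ∈ (Submodule.span ℂ T)ᗮ ↔ ∀ v ∈ T, (inner ℂ v x : ℂ) = 0 := by
  constructor
  · intro hx v hv
    exact hx v (Submodule.subset_span hv)
  · intro h v hv
    induction hv using Submodule.span_induction with
    | mem u hu => exact h u hu
    | zero => simp
    | add u w _ _ hu hw => rw [inner_add_left, hu, hw, add_zero]
    | smul c u _ hu => rw [inner_smul_left, hu, mul_zero]

lemma traceOrthCompl_eq (S : Set (Matrix (Fin n) (Fin n) ℂ)) :
    traceOrthCompl S =
      (Submodule.span ℂ (matEquiv n '' S))ᗮ.comap (matEquiv n).toLinearMap := by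
  ext X
  simp only [Submodule.mem_comap, LinearEquiv.coe_coe, mem_orthogonal_span_iff]
  constructor
  · intro h v hv
    obtain ⟨A, hA, rfl⟩ := hv
    rw [inner_matEquiv]
    exact h A hA
  · intro h A hA
    rw [← inner_matEquiv]
    exact h _ ⟨A, hA, rfl⟩

lemma double_orth (S : Set (Matrix (Fin n) (Fin n) ℂ)) :
    traceOrthCompl ((traceOrthCompl S : Submodule ℂ (Matrix (Fin n) (Fin n) ℂ)) :
        Set (Matrix (Fin n) (Fin n) ℂ)) = Submodule.span ℂ S := by
  rw [traceOrthCompl_eq, traceOrthCompl_eq]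
  have himg : matEquiv n '' ((Submodule.span ℂ (matEquiv n '' S))ᗮ.comap
      (matEquiv n).toLinearMap : Set (Matrix (Fin n) (Fin n) ℂ)) =
      ((Submodule.span ℂ (matEquiv n '' S))ᗮ : Set (EuclideanSpace ℂ (Fin n × Fin n))) := by
    ext y
    simp only [Set.mem_image, SetLike.mem_coe, Submodule.mem_comap, LinearEquiv.coe_coe]
    constructor
    · rintro ⟨x, hx, rfl⟩; exact hx
    · intro hy; exact ⟨(matEquiv n).symm y, by simpa using hy, by simp⟩
  rw [himg, Submodule.span_eq, Submodule.orthogonal_orthogonal]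
  have : matEquiv n '' S = (matEquiv n).toLinearMap '' S := rfl
  rw [this, Submodule.span_image]
  exact Submodule.comap_map_eq_of_injective (matEquiv n).injective _

lemma commutantSub_span (S : Set (Matrix (Fin n) (Fin n) ℂ)) :
    commutantSub ((Submodule.span ℂ S : Submodule ℂ (Matrix (Fin n) (Fin n) ℂ)) :
      Set (Matrix (Fin n) (Fin n) ℂ)) = commutantSub S := by
  apply le_antisymm
  · intro X hX A hA
    exact hX A (Submodule.subset_span hA)
  · intro X hX A hA
    induction hA using Submodule.span_induction with
    | mem u hu => exact hX u hu
    | zero => simp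
    | add u w _ _ hu hw => rw [Matrix.mul_add, Matrix.add_mul, hu, hw]
    | smul c u _ hu => rw [Matrix.mul_smul, Matrix.smul_mul, hu]

end Aux

/-- the commutant of `{Q V_j* V_i Q}` equals the commutant of the
trace-orthogonal complement of `ker (Φ^C ∘ P_Q)`. -/
theorem stmt_2 {d n : ℕ} (V : Fin d → Matrix (Fin n) (Fin n) ℂ)
    (hV : ∑ i, (V i)ᴴ * V i = 1)
    (Q : Matrix (Fin n) (Fin n) ℂ) (hQ : Q * Q = Q) (hQh : Qᴴ = Q) :
    commutantSub (Set.range fun p : Fin d × Fin d => Q * (V p.2)ᴴ * V p.1 * Q) =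
      commutantSub
        ((traceOrthCompl
          ((LinearMap.ker ((complMap V).comp (comprMap Q)) :
              Submodule ℂ (Matrix (Fin n) (Fin n) ℂ)) : Set (Matrix (Fin n) (Fin n) ℂ))
            : Submodule ℂ (Matrix (Fin n) (Fin n) ℂ)) : Set (Matrix (Fin n) (Fin n) ℂ)) := by
  set S : Set (Matrix (Fin n) (Fin n) ℂ) :=
    Set.range fun p : Fin d × Fin d => Q * (V p.2)ᴴ * V p.1 * Q with hS
  have key : ∀ (p : Fin d × Fin d) (X : Matrix (Fin n) (Fin n) ℂ),
      ((Q * (V p.2)ᴴ * V p.1 * Q)ᴴ * X).trace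
        = ((Q * X * Q) * ((V p.1)ᴴ * V p.2)).trace := by
    intro p X
    have h1 : (Q * (V p.2)ᴴ * V p.1 * Q)ᴴ = Q * (V p.1)ᴴ * V p.2 * Q := by
      simp [Matrix.conjTranspose_mul, hQh, Matrix.mul_assoc]
    rw [h1]
    calc ((Q * (V p.1)ᴴ * V p.2 * Q) * X).trace
        = ((Q * (V p.1)ᴴ * V p.2) * (Q * X)).trace := by
          rw [Matrix.mul_assoc (Q * (V p.1)ᴴ * V p.2) Q X]
      _ = ((Q * X) * (Q * (V p.1)ᴴ * V p.2)).trace := Matrix.trace_mul_comm _ _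
      _ = ((Q * X * Q) * ((V p.1)ᴴ * V p.2)).trace := by
          rw [Matrix.mul_assoc (Q * X) Q ((V p.1)ᴴ * V p.2),
            Matrix.mul_assoc Q ((V p.1)ᴴ) (V p.2)]
  have hker : LinearMap.ker ((complMap V).comp (comprMap Q)) = traceOrthCompl S := by
    ext X
    constructor
    · intro hX A hA
      obtain ⟨p, rfl⟩ := hA
      have h0 : complMap V (comprMap Q X) = 0 := hX
      have h1 : ((Q * X * Q) * ((V p.1)ᴴ * V p.2)).trace = 0 := by
        have := congrFun (congrFun (congrArg (fun M : Matrix (Fin d) (Fin d) ℂ =>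
          (M : Fin d → Fin d → ℂ)) h0) p.2) p.1
        simpa [complMap, comprMap] using this
      rw [key p X]
      exact h1
    · intro hX
      show complMap V (comprMap Q X) = 0
      ext i j
      show ((Q * X * Q) * ((V j)ᴴ * V i)).trace = 0
      rw [← key (j, i) X]
      exact hX _ ⟨(j, i), rfl⟩
  rw [hker, double_orth, commutantSub_span]
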